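/- If F(x) = \sum_{n≥0} c_n x^n is a formal power series over ℚ satisfying x^2(1+x^2)F'(x) - (1+x^2)(1-x-x^2)F(x) + 1 - x^2 = 0 with F(0)=1, then F is unique; i.e., the coefficients c_n are determined uniquely by this differential equation and initial condition. -/

import Mathlib

open PowerSeries

lemma aux_coeff_zero (A : PowerSeries ℚ) (k n : ℕ)
    (h : ∀ m, m + k ≤ n → PowerSeries.coeff m A = 0) :
    PowerSeries.coeff n (X ^ k * A) = 0 := by
  rw [PowerSeries.coeff_X_pow_mul']
  split_ifs with hle
  · exact h _ (by omega)
  · rfl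

/-- The formal power series solution of
`x²(1+x²)F'(x) - (1+x²)(1-x-x²)F(x) + 1 - x² = 0`, `F(0) = 1`, is unique. -/
theorem powerSeries_ODE_solution_unique (F G : PowerSeries ℚ)
    (hF : X ^ 2 * (1 + X ^ 2) * (d⁄dX ℚ F) - (1 + X ^ 2) * (1 - X - X ^ 2) * F
        + 1 - X ^ 2 = 0)
    (hF0 : PowerSeries.constantCoeff F = 1)
    (hG : X ^ 2 * (1 + X ^ 2) * (d⁄dX ℚ G) - (1 + X ^ 2) * (1 - X - X ^ 2) * G
        + 1 - X ^ 2 = 0)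
    (hG0 : PowerSeries.constantCoeff G = 1) :
    F = G := by
  set H := F - G with hHdef
  have hdH : d⁄dX ℚ H = d⁄dX ℚ F - d⁄dX ℚ G := map_sub _ _ _
  have hH : H - X ^ 2 * (d⁄dX ℚ H) - X ^ 4 * (d⁄dX ℚ H)
      - X * H - X ^ 3 * H - X ^ 4 * H = 0 := by
    rw [hHdef, hdH]
    linear_combination hG - hF
  suffices h : ∀ n, PowerSeries.coeff n H = 0 by
    have hz : H = 0 := PowerSeries.ext fun n => by simp [h n]
    rw [← sub_eq_zero]; exact hz
  intro n
  induction n using Nat.strong_induction_on with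
  | _ n ih =>
    cases n with
    | zero =>
      simp only [PowerSeries.coeff_zero_eq_constantCoeff, hHdef, map_sub, hF0, hG0, sub_self]
    | succ m =>
      have hcoeff := congrArg (PowerSeries.coeff (m + 1)) hH
      have hd : ∀ k < m + 1, PowerSeries.coeff k (d⁄dX ℚ H) = 0 ∨ True := fun _ _ => Or.inr trivial
      have hd2 : PowerSeries.coeff (m+1) (X ^ 2 * (d⁄dX ℚ H)) = 0 := by
        apply aux_coeff_zero
        intro k hk
        rw [PowerSeries.coeff_derivative]
        rw [ih (k+1) (by omega)]; ring
      have hd4 : PowerSeries.coeff (m+1) (X ^ 4 * (d⁄dX ℚ H)) = 0 := by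
        apply aux_coeff_zero
        intro k hk
        rw [PowerSeries.coeff_derivative]
        rw [ih (k+1) (by omega)]; ring
      have h1 : PowerSeries.coeff (m+1) (X * H) = 0 := by
        have := aux_coeff_zero H 1 (m+1) (fun k hk => ih k (by omega))
        simpa using this
      have h3 : PowerSeries.coeff (m+1) (X ^ 3 * H) = 0 :=
        aux_coeff_zero H 3 (m+1) (fun k hk => ih k (by omega))
      have h4 : PowerSeries.coeff (m+1) (X ^ 4 * H) = 0 :=
        aux_coeff_zero H 4 (m+1) (fun k hk => ih k (by omega))
      simp only [map_sub, hd2, hd4, h1, h3, h4, map_zero, sub_zero] at hcoeff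
      exact hcoeff
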